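/- Let U be a connected open neighbourhood of 0 in ℝⁿ, γ ∈ ℚ₊ⁿ with γ = (γ₁,…,γₙ), and let h : U → ℝ be a function such that g₁(x) := x^{−γ}·h(x) is defined on {x ∈ U : x^γ ≠ 0}, |g₁| extends continuously to 0 with nonzero limit L ≠ 0, and such that for each sufficiently small σ > 0 the function t ↦ h(t, σ, …, σ) is real-analytic on an interval around 0. Then γ₁ ∈ ℕ. -/

import Mathlib

open Filter Topology

/-- The "monomial" `∏ i x i ^ γ i` with rational exponents (via real powers of `|x i|`). -/
noncomputable def rmon {n : ℕ} (γ : Fin n → ℚ) (x : Fin n → ℝ) : ℝ :=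
  ∏ i, |x i| ^ ((γ i : ℝ))

/-- Case I integrality argument: if `g₁(x) = x^{-γ}·h(x)` and `|g₁|` extends continuously
to `0` with nonzero limit, and `t ↦ h(t, σ, …, σ)` is real-analytic near `t = 0` for all
small `σ > 0`, then the first rational exponent `γ₁` is a nonnegative integer. -/
theorem first_exponent_is_integer
    (n : ℕ) (hn : 0 < n)
    (U : Set (Fin n → ℝ)) (hUopen : IsOpen U) (hUconn : IsConnected U)
    (hU0 : (0 : Fin n → ℝ) ∈ U)
    (γ : Fin n → ℚ) (hγ : ∀ i, 0 ≤ γ i)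
    (h : (Fin n → ℝ) → ℝ) (L : ℝ) (hL : L ≠ 0)
    (hlim : Tendsto (fun x => |h x / rmon γ x|)
      (nhdsWithin (0 : Fin n → ℝ) {x ∈ U | rmon γ x ≠ 0}) (nhds L))
    (hanal : ∃ σ₀ > (0 : ℝ), ∀ σ : ℝ, 0 < σ → σ < σ₀ →
      ∃ δ > (0 : ℝ), AnalyticOnNhd ℝ
        (fun t : ℝ => h (fun i => if (i : ℕ) = 0 then t else σ)) (Set.Ioo (-δ) δ)) :
    ∃ m : ℕ, γ ⟨0, hn⟩ = (m : ℚ) := by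
  classical
  set e0 : Fin n := ⟨0, hn⟩ with he0
  by_cases hγ0 : γ e0 = 0
  · exact ⟨0, by simpa using hγ0⟩
  have haQ : 0 < γ e0 := lt_of_le_of_ne (hγ e0) (Ne.symm hγ0)
  set a : ℝ := (γ e0 : ℝ) with ha
  have ha0 : 0 < a := by rw [ha]; exact_mod_cast haQ
  set S : Set (Fin n → ℝ) := {x ∈ U | rmon γ x ≠ 0} with hS
  -- the set S accumulates at 0
  have hSne : (nhdsWithin (0 : Fin n → ℝ) S).NeBot := by
    rw [← mem_closure_iff_nhdsWithin_neBot]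
    rw [Metric.mem_closure_iff]
    intro ε hε
    obtain ⟨r, hr, hball⟩ := Metric.isOpen_iff.mp hUopen 0 hU0
    set ε' : ℝ := min ε r / 2 with hε'
    have hε'pos : 0 < ε' := by positivity
    have hε'lt : ε' < min ε r := by
      have : 0 < min ε r := lt_min hε hr
      simpa [hε'] using half_lt_self this
    refine ⟨fun _ => ε', ⟨?_, ?_⟩, ?_⟩
    · apply hball
      rw [Metric.mem_ball, dist_pi_lt_iff hr]
      intro i
      simp only [Pi.zero_apply, Real.dist_eq, sub_zero]
      rw [abs_of_pos hε'pos]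
      exact hε'lt.trans_le (min_le_right _ _)
    · simp only [rmon, ne_eq]
      apply ne_of_gt
      exact Finset.prod_pos fun i _ =>
        Real.rpow_pos_of_pos (by rwa [abs_of_pos hε'pos]) _
    · rw [dist_pi_lt_iff hε]
      intro i
      simp only [Pi.zero_apply, Real.dist_eq, zero_sub, abs_neg]
      rw [abs_of_pos hε'pos]
      exact hε'lt.trans_le (min_le_left _ _)
  -- L is positive
  have hL0 : 0 < L := by
    have hge : 0 ≤ L := ge_of_tendsto hlim (Eventually.of_forall fun x => abs_nonneg _)
    exact lt_of_le_of_ne hge (Ne.symm hL)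
  -- quantitative bound from the limit
  obtain ⟨δ₁, hδ₁, hbd⟩ := (Metric.tendsto_nhdsWithin_nhds.mp hlim) (L / 2) (by linarith)
  -- ball inside U
  obtain ⟨ρ, hρ, hball⟩ := Metric.isOpen_iff.mp hUopen 0 hU0
  obtain ⟨σ₀, hσ₀, hA⟩ := hanal
  set δ₂ : ℝ := min δ₁ ρ with hδ₂def
  have hδ₂ : 0 < δ₂ := lt_min hδ₁ hρ
  set σ : ℝ := min σ₀ δ₂ / 2 with hσdef
  have hσ : 0 < σ := by positivity
  have hσlt : σ < min σ₀ δ₂ := by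
    have : 0 < min σ₀ δ₂ := lt_min hσ₀ hδ₂
    simpa [hσdef] using half_lt_self this
  have hσσ₀ : σ < σ₀ := hσlt.trans_le (min_le_left _ _)
  have hσδ₂ : σ < δ₂ := hσlt.trans_le (min_le_right _ _)
  obtain ⟨δ, hδ, hAn⟩ := hA σ hσ hσσ₀
  set β : ℝ → (Fin n → ℝ) := fun t => fun i => if (i : ℕ) = 0 then t else σ with hβ
  set f : ℝ → ℝ := fun t => h (β t) with hf
  have hfan : AnalyticAt ℝ f 0 := hAn 0 ⟨by linarith, hδ⟩
  -- distance of curve points to 0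
  have hdist : ∀ t : ℝ, |t| < δ₂ → dist (β t) 0 < δ₂ := by
    intro t ht
    rw [dist_pi_lt_iff hδ₂]
    intro i
    simp only [hβ, Pi.zero_apply, Real.dist_eq, sub_zero]
    by_cases hi : (i : ℕ) = 0
    · simpa [hi] using ht
    · rw [if_neg hi, abs_of_pos hσ]; exact hσδ₂
  -- constant K
  set K : ℝ := ∏ i ∈ Finset.univ.erase e0, |σ| ^ ((γ i : ℝ)) with hK
  have hKpos : 0 < K :=
    Finset.prod_pos fun i _ => Real.rpow_pos_of_pos (by rwa [abs_of_pos hσ]) _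
  -- monomial along the curve
  have hrmon : ∀ t : ℝ, rmon γ (β t) = |t| ^ a * K := by
    intro t
    rw [rmon, ← Finset.mul_prod_erase Finset.univ _ (Finset.mem_univ e0), hK]
    have h1 : |β t e0| ^ ((γ e0 : ℝ)) = |t| ^ a := by simp [hβ, he0, ha]
    have h2 : ∀ i ∈ Finset.univ.erase e0,
        |β t i| ^ ((γ i : ℝ)) = |σ| ^ ((γ i : ℝ)) := by
      intro i hi
      have hne : (i : ℕ) ≠ 0 := by
        intro hc
        exact (Finset.mem_erase.mp hi).1 (Fin.ext (by simp [hc, he0]))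
      simp [hβ, hne]
    rw [h1, Finset.prod_congr rfl h2]
  -- main two-sided bound along the curve
  have hbound : ∀ t : ℝ, t ≠ 0 → |t| < δ₂ →
      L / 2 < |f t| / (|t| ^ a * K) ∧ |f t| / (|t| ^ a * K) < 3 * L / 2 := by
    intro t ht htδ
    have htpos : 0 < |t| := abs_pos.mpr ht
    have hrm : 0 < |t| ^ a * K := mul_pos (Real.rpow_pos_of_pos htpos a) hKpos
    have hmem : β t ∈ S := by
      refine ⟨hball ?_, ?_⟩
      · rw [Metric.mem_ball]
        exact (hdist t htδ).trans_le (min_le_right _ _)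
      · rw [hrmon t]; exact ne_of_gt hrm
    have hd : dist (β t) 0 < δ₁ := (hdist t htδ).trans_le (min_le_left _ _)
    have := hbd hmem hd
    rw [Real.dist_eq, abs_lt] at this
    have heq : |h (β t) / rmon γ (β t)| = |f t| / (|t| ^ a * K) := by
      rw [abs_div, hrmon t, abs_of_pos hrm]
    rw [heq] at this
    constructor <;> linarith [this.1, this.2]
  -- f is not eventually zero near 0
  have hne : ¬ (∀ᶠ t in nhds (0 : ℝ), f t = 0) := by
    intro hev
    obtain ⟨r, hr, hzero⟩ := Metric.eventually_nhds_iff.mp hev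
    set t : ℝ := min r δ₂ / 2 with htdef
    have htpos : 0 < t := by positivity
    have htlt : t < min r δ₂ := by
      have : 0 < min r δ₂ := lt_min hr hδ₂
      simpa [htdef] using half_lt_self this
    have h1 : |t| < δ₂ := by
      rw [abs_of_pos htpos]; exact htlt.trans_le (min_le_right _ _)
    have h2 : f t = 0 := by
      apply hzero
      rw [Real.dist_eq, sub_zero, abs_of_pos htpos]
      exact htlt.trans_le (min_le_left _ _)
    have := (hbound t (ne_of_gt htpos) h1).1
    rw [h2] at this
    simp only [abs_zero, zero_div] at this
    linarith
  -- the order of f at 0 is a finite natural number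
  have hord : analyticOrderAt f 0 ≠ ⊤ := fun hh => hne ((analyticOrderAt_eq_top).mp hh)
  obtain ⟨m, hm⟩ : ∃ m : ℕ, analyticOrderAt f 0 = (m : ℕ∞) := by
    cases' hmo : analyticOrderAt f 0 with m
    · exact absurd hmo hord
    · exact ⟨m, rfl⟩
  obtain ⟨g, hgan, hg0, hgev⟩ := (hfan.analyticOrderAt_eq_natCast (n := m)).mp hm
  -- suffices : a = m
  suffices hc : a = (m : ℝ) by
    refine ⟨m, ?_⟩
    have : ((γ e0 : ℝ)) = ((m : ℚ) : ℝ) := by push_cast; exact hc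
    exact_mod_cast this
  by_contra hcne
  set c : ℝ := (m : ℝ) - a with hcdef
  -- key bound on the right of 0 : L/2 < t^c * |g t| / K < 3L/2
  have hkey : ∀ᶠ t in nhdsWithin (0 : ℝ) (Set.Ioi 0),
      L / 2 < t ^ c * |g t| / K ∧ t ^ c * |g t| / K < 3 * L / 2 := by
    have hev1 : ∀ᶠ t in nhdsWithin (0 : ℝ) (Set.Ioi 0), f t = t ^ m * g t := by
      apply nhdsWithin_le_nhds
      filter_upwards [hgev] with t ht using by simpa using ht
    have hev2 : ∀ᶠ t in nhdsWithin (0 : ℝ) (Set.Ioi 0), |t| < δ₂ := by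
      apply nhdsWithin_le_nhds
      have : Set.Ioo (-δ₂) δ₂ ∈ nhds (0 : ℝ) := Ioo_mem_nhds (by linarith) hδ₂
      filter_upwards [this] with t ht using abs_lt.mpr ⟨ht.1, ht.2⟩
    filter_upwards [hev1, hev2, self_mem_nhdsWithin] with t h1 h2 (h3 : 0 < t)
    have hb := hbound t (ne_of_gt h3) h2
    have habs : |t| = t := abs_of_pos h3
    have hrw : |f t| / (|t| ^ a * K) = t ^ c * |g t| / K := by
      rw [h1, habs, abs_mul, abs_pow, habs]
      rw [← Real.rpow_natCast t m]
      have : (m : ℝ) = c + a := by rw [hcdef]; ring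
      rw [this, Real.rpow_add h3]
      field_simp
    rw [hrw] at hb
    exact hb
  have hgt : Tendsto (fun t => |g t|) (nhdsWithin (0 : ℝ) (Set.Ioi 0)) (nhds |g 0|) :=
    ((hgan.continuousAt.abs).continuousWithinAt).tendsto
  rcases lt_or_gt_of_ne hcne with hlt | hgt'
  · -- a < m, i.e. c > 0 : t^c * |g t| → 0, contradicting lower bound
    have hcpos : 0 < c := by rw [hcdef]; linarith
    have htc : Tendsto (fun t : ℝ => t ^ c) (nhdsWithin (0 : ℝ) (Set.Ioi 0)) (nhds 0) := by
      have := (Real.continuousAt_rpow_const 0 c (Or.inr hcpos.le)).continuousWithinAt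
        (s := Set.Ioi 0)
      simpa [Real.zero_rpow (ne_of_gt hcpos)] using this.tendsto
    have hprod : Tendsto (fun t : ℝ => t ^ c * |g t| / K)
        (nhdsWithin (0 : ℝ) (Set.Ioi 0)) (nhds 0) := by
      have := (htc.mul hgt).div_const K
      simpa using this
    have : L / 2 ≤ 0 := ge_of_tendsto hprod (hkey.mono fun t ht => ht.1.le)
    linarith
  · -- a > m, i.e. c < 0 : |g t| ≤ (3L/2) K t^(-c) → 0, contradicting |g 0| ≠ 0
    have hcneg : c < 0 := by rw [hcdef]; linarith
    have htc : Tendsto (fun t : ℝ => t ^ (-c)) (nhdsWithin (0 : ℝ) (Set.Ioi 0)) (nhds 0) := by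
      have := (Real.continuousAt_rpow_const 0 (-c) (Or.inr (by linarith))).continuousWithinAt
        (s := Set.Ioi 0)
      simpa [Real.zero_rpow (ne_of_gt (neg_pos.mpr hcneg))] using this.tendsto
    have hprod : Tendsto (fun t : ℝ => 3 * L / 2 * K * t ^ (-c))
        (nhdsWithin (0 : ℝ) (Set.Ioi 0)) (nhds 0) := by
      simpa using htc.const_mul (3 * L / 2 * K)
    have hle : ∀ᶠ t in nhdsWithin (0 : ℝ) (Set.Ioi 0),
        |g t| ≤ 3 * L / 2 * K * t ^ (-c) := by
      filter_upwards [hkey, self_mem_nhdsWithin] with t ht (h3 : 0 < t)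
      have h2 : t ^ c * |g t| < 3 * L / 2 * K := by
        have := ht.2
        rw [div_lt_iff₀ hKpos] at this
        linarith
      have htc0 : 0 < t ^ (-c) := Real.rpow_pos_of_pos h3 _
      have hid : t ^ c * t ^ (-c) = 1 := by
        rw [← Real.rpow_add h3]; simp
      have h4 : t ^ c * |g t| * t ^ (-c) ≤ 3 * L / 2 * K * t ^ (-c) :=
        mul_le_mul_of_nonneg_right h2.le htc0.le
      have h5 : t ^ c * |g t| * t ^ (-c) = |g t| := by
        rw [mul_comm (t ^ c) (|g t|), mul_assoc, hid, mul_one]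
      linarith
    have : |g 0| ≤ 0 := le_of_tendsto_of_tendsto hgt hprod hle
    have : |g 0| = 0 := le_antisymm this (abs_nonneg _)
    exact hg0 (abs_eq_zero.mp this)
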